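/- arXiv:1110.4657 — 2 statements merged into one kernel-verified Lean document; each statement's English description precedes it below -/
import Mathlib

section
/- Let M be a Markov chain on a finite state space X with everywhere-positive stationary distribution π, and let A, B be a complementary pair of subsets (A∩B = ∅, A∪B = X). Let U ⊆ X satisfy π(U∩A)/π(A) < ε < 1 and π(U∩B)/π(B) < δ < 1. Suppose λ₁ ≤ p_{b→A} ≤ κ₁ for all b ∈ B \ U and λ₂ ≤ p_{a→B} ≤ κ₂ for all a ∈ A \ U, with λ₂ > 0 and (1−ε)κ₂ + ε > 0. Then ((1−δ)λ₁)/((1−ε)κ₂ + ε) ≤ π(A)/π(B) ≤ ((1−δ)κ₁ + δ)/((1−ε)λ₂). -/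
/-- Estimating the ratio of stationary probabilities of a complementary pair
A, B = Aᶜ via the two-state lumping and the bounds on individual transition
probabilities outside a small exceptional set U. -/
theorem stmt12 {X : Type*} [Fintype X] [DecidableEq X]
    (p : X → X → ℝ) (hnn : ∀ x y, 0 ≤ p x y) (hrow : ∀ x, ∑ y, p x y = 1)
    (π : X → ℝ) (hpos : ∀ x, 0 < π x) (hsum : ∑ x, π x = 1)
    (hstat : ∀ y, ∑ x, π x * p x y = π y)
    (A U : Finset X) (hA : A.Nonempty) (hB : Aᶜ.Nonempty)
    (ε δ lam₁ κ₁ lam₂ κ₂ : ℝ)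
    (hεA : (∑ x ∈ U ∩ A, π x) / (∑ x ∈ A, π x) < ε) (hε1 : ε < 1)
    (hδB : (∑ x ∈ U ∩ Aᶜ, π x) / (∑ x ∈ Aᶜ, π x) < δ) (hδ1 : δ < 1)
    (h₁ : ∀ b ∈ Aᶜ \ U, lam₁ ≤ ∑ a ∈ A, p b a ∧ ∑ a ∈ A, p b a ≤ κ₁)
    (h₂ : ∀ a ∈ A \ U, lam₂ ≤ ∑ b ∈ Aᶜ, p a b ∧ ∑ b ∈ Aᶜ, p a b ≤ κ₂)
    (hlam₂ : 0 < lam₂) (hden : 0 < (1 - ε) * κ₂ + ε) :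
    ((1 - δ) * lam₁) / ((1 - ε) * κ₂ + ε) ≤ (∑ a ∈ A, π a) / (∑ b ∈ Aᶜ, π b) ∧
      (∑ a ∈ A, π a) / (∑ b ∈ Aᶜ, π b) ≤ ((1 - δ) * κ₁ + δ) / ((1 - ε) * lam₂) := by
  set PA := ∑ a ∈ A, π a with hPAdef
  set PB := ∑ b ∈ Aᶜ, π b with hPBdef
  have hPA : 0 < PA := Finset.sum_pos (fun x _ => hpos x) hA
  have hPB : 0 < PB := Finset.sum_pos (fun x _ => hpos x) hB
  set uA := ∑ x ∈ U ∩ A, π x with huAdef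
  set uB := ∑ x ∈ U ∩ Aᶜ, π x with huBdef
  have huA : uA < ε * PA := by
    have := (div_lt_iff₀ hPA).mp hεA; linarith
  have huB : uB < δ * PB := by
    have := (div_lt_iff₀ hPB).mp hδB; linarith
  have huA0 : 0 ≤ uA := Finset.sum_nonneg fun x _ => (hpos x).le
  have huB0 : 0 ≤ uB := Finset.sum_nonneg fun x _ => (hpos x).le
  -- per-state transition probabilities into Aᶜ (from A) and into A (from Aᶜ)
  set q : X → ℝ := fun x => ∑ b ∈ Aᶜ, p x b with hqdef
  set r : X → ℝ := fun x => ∑ a ∈ A, p x a with hrdef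
  have hq0 : ∀ x, 0 ≤ q x := fun x => Finset.sum_nonneg fun b _ => hnn x b
  have hr0 : ∀ x, 0 ≤ r x := fun x => Finset.sum_nonneg fun a _ => hnn x a
  have hqr : ∀ x, r x + q x = 1 := fun x => by
    simpa using (Finset.sum_add_sum_compl A (p x)).trans (hrow x)
  have hq1 : ∀ x, q x ≤ 1 := fun x => by have := hqr x; have := hr0 x; linarith
  have hr1 : ∀ x, r x ≤ 1 := fun x => by have := hqr x; have := hq0 x; linarith
  -- the flow identity F = G
  set F := ∑ a ∈ A, π a * q a with hFdef
  set G := ∑ b ∈ Aᶜ, π b * r b with hGdef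
  have hFG : F = G := by
    have h1 : ∑ x, π x * q x = PB := by
      simp only [hqdef, Finset.mul_sum]
      rw [Finset.sum_comm]
      exact Finset.sum_congr rfl fun b _ => hstat b
    have h2 : F + ∑ b ∈ Aᶜ, π b * q b = PB := by
      rw [← h1, Finset.sum_add_sum_compl A (fun x => π x * q x)]
    have h3 : ∑ b ∈ Aᶜ, π b * q b = PB - G := by
      have : ∀ b, π b * q b = π b - π b * r b := fun b => by
        linear_combination π b * (hqr b)
      rw [Finset.sum_congr rfl fun b _ => this b, Finset.sum_sub_distrib]
    rw [h3] at h2; linarith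
  -- splitting sums over U
  have hsplitA : ∀ f : X → ℝ, ∑ a ∈ A, f a = (∑ a ∈ A \ U, f a) + ∑ a ∈ A ∩ U, f a := by
    intro f
    rw [add_comm, Finset.sum_inter_add_sum_sdiff]
  have hAU : ∑ a ∈ A ∩ U, π a = uA := by rw [huAdef, Finset.inter_comm]
  have hBU : ∑ b ∈ Aᶜ ∩ U, π b = uB := by rw [huBdef, Finset.inter_comm]
  have hsplitB : ∀ f : X → ℝ, ∑ b ∈ Aᶜ, f b = (∑ b ∈ Aᶜ \ U, f b) + ∑ b ∈ Aᶜ ∩ U, f b := by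
    intro f
    rw [add_comm, Finset.sum_inter_add_sum_sdiff]
  have hPAU : ∑ a ∈ A \ U, π a = PA - uA := by
    have := hsplitA π; rw [hAU] at this; linarith
  have hPBU : ∑ b ∈ Aᶜ \ U, π b = PB - uB := by
    have := hsplitB π; rw [hBU] at this; linarith
  -- bounds on F
  have hFlow : lam₂ * (1 - ε) * PA ≤ F := by
    have h1 : ∑ a ∈ A \ U, π a * lam₂ ≤ ∑ a ∈ A \ U, π a * q a :=
      Finset.sum_le_sum fun a ha =>
        mul_le_mul_of_nonneg_left ((h₂ a ha).1) (hpos a).le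
    have h2 : (0:ℝ) ≤ ∑ a ∈ A ∩ U, π a * q a :=
      Finset.sum_nonneg fun a _ => mul_nonneg (hpos a).le (hq0 a)
    have h3 : ∑ a ∈ A \ U, π a * lam₂ = (PA - uA) * lam₂ := by
      rw [← Finset.sum_mul, hPAU]
    have h4 := hsplitA (fun a => π a * q a)
    rw [← hFdef] at h4
    calc lam₂ * (1 - ε) * PA = (1 - ε) * PA * lam₂ := by ring
      _ ≤ (PA - uA) * lam₂ := mul_le_mul_of_nonneg_right (by linarith) hlam₂.le
      _ = ∑ a ∈ A \ U, π a * lam₂ := h3.symm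
      _ ≤ ∑ a ∈ A \ U, π a * q a := h1
      _ ≤ F := by linarith
  have hFhigh : F ≤ ((1 - ε) * κ₂ + ε) * PA := by
    set κ := min κ₂ 1 with hκdef
    have h1 : ∑ a ∈ A \ U, π a * q a ≤ ∑ a ∈ A \ U, π a * κ :=
      Finset.sum_le_sum fun a ha =>
        mul_le_mul_of_nonneg_left (le_min (h₂ a ha).2 (hq1 a)) (hpos a).le
    have h2 : ∑ a ∈ A ∩ U, π a * q a ≤ ∑ a ∈ A ∩ U, π a := by
      refine Finset.sum_le_sum fun a _ => ?_
      simpa using mul_le_mul_of_nonneg_left (hq1 a) (hpos a).le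
    have h3 : ∑ a ∈ A \ U, π a * κ = (PA - uA) * κ := by
      rw [← Finset.sum_mul, hPAU]
    have h4 := hsplitA (fun a => π a * q a)
    rw [← hFdef] at h4
    have hκ1 : κ ≤ 1 := min_le_right _ _
    have hκκ : κ ≤ κ₂ := min_le_left _ _
    rw [hAU] at h2
    have e1 : uA * (1 - κ) ≤ ε * PA * (1 - κ) :=
      mul_le_mul_of_nonneg_right huA.le (by linarith)
    have e3 : ((1 - ε) * κ + ε) * PA ≤ ((1 - ε) * κ₂ + ε) * PA := by
      have e2 : (1 - ε) * κ ≤ (1 - ε) * κ₂ :=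
        mul_le_mul_of_nonneg_left hκκ (by linarith)
      exact mul_le_mul_of_nonneg_right (by linarith) hPA.le
    calc F = _ := h4
      _ ≤ (PA - uA) * κ + uA := by linarith
      _ ≤ ((1 - ε) * κ + ε) * PA := by linarith [e1]
      _ ≤ ((1 - ε) * κ₂ + ε) * PA := e3
  -- bounds on G
  have hGlow : (1 - δ) * lam₁ * PB ≤ G := by
    set lam := max lam₁ 0 with hlamdef
    have h1 : ∑ b ∈ Aᶜ \ U, π b * lam ≤ ∑ b ∈ Aᶜ \ U, π b * r b :=
      Finset.sum_le_sum fun b hb =>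
        mul_le_mul_of_nonneg_left (max_le (h₁ b hb).1 (hr0 b)) (hpos b).le
    have h2 : (0:ℝ) ≤ ∑ b ∈ Aᶜ ∩ U, π b * r b :=
      Finset.sum_nonneg fun b _ => mul_nonneg (hpos b).le (hr0 b)
    have h3 : ∑ b ∈ Aᶜ \ U, π b * lam = (PB - uB) * lam := by
      rw [← Finset.sum_mul, hPBU]
    have h4 := hsplitB (fun b => π b * r b)
    rw [← hGdef] at h4
    have hlam0 : 0 ≤ lam := le_max_right _ _
    have hlaml : lam₁ ≤ lam := le_max_left _ _
    have e0 : (0:ℝ) ≤ (1 - δ) * PB := mul_nonneg (by linarith) hPB.le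
    calc (1 - δ) * lam₁ * PB = lam₁ * ((1 - δ) * PB) := by ring
      _ ≤ lam * ((1 - δ) * PB) := mul_le_mul_of_nonneg_right hlaml e0
      _ = (1 - δ) * PB * lam := by ring
      _ ≤ (PB - uB) * lam := mul_le_mul_of_nonneg_right (by linarith) hlam0
      _ = ∑ b ∈ Aᶜ \ U, π b * lam := h3.symm
      _ ≤ ∑ b ∈ Aᶜ \ U, π b * r b := h1
      _ ≤ G := by linarith
  have hGhigh : G ≤ ((1 - δ) * κ₁ + δ) * PB := by
    set κ := min κ₁ 1 with hκdef
    have h1 : ∑ b ∈ Aᶜ \ U, π b * r b ≤ ∑ b ∈ Aᶜ \ U, π b * κ :=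
      Finset.sum_le_sum fun b hb =>
        mul_le_mul_of_nonneg_left (le_min (h₁ b hb).2 (hr1 b)) (hpos b).le
    have h2 : ∑ b ∈ Aᶜ ∩ U, π b * r b ≤ ∑ b ∈ Aᶜ ∩ U, π b := by
      refine Finset.sum_le_sum fun b _ => ?_
      simpa using mul_le_mul_of_nonneg_left (hr1 b) (hpos b).le
    have h3 : ∑ b ∈ Aᶜ \ U, π b * κ = (PB - uB) * κ := by
      rw [← Finset.sum_mul, hPBU]
    have h4 := hsplitB (fun b => π b * r b)
    rw [← hGdef] at h4
    have hκ1 : κ ≤ 1 := min_le_right _ _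
    have hκκ : κ ≤ κ₁ := min_le_left _ _
    rw [hBU] at h2
    have e1 : uB * (1 - κ) ≤ δ * PB * (1 - κ) :=
      mul_le_mul_of_nonneg_right huB.le (by linarith)
    have e3 : ((1 - δ) * κ + δ) * PB ≤ ((1 - δ) * κ₁ + δ) * PB := by
      have e2 : (1 - δ) * κ ≤ (1 - δ) * κ₁ :=
        mul_le_mul_of_nonneg_left hκκ (by linarith)
      exact mul_le_mul_of_nonneg_right (by linarith) hPB.le
    calc G = _ := h4
      _ ≤ (PB - uB) * κ + uB := by linarith
      _ ≤ ((1 - δ) * κ + δ) * PB := by linarith [e1]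
      _ ≤ ((1 - δ) * κ₁ + δ) * PB := e3
  constructor
  · rw [div_le_div_iff₀ hden hPB]
    linarith [hFG, hFhigh, hGlow]
  · have hden2 : 0 < (1 - ε) * lam₂ := mul_pos (by linarith) hlam₂
    rw [div_le_div_iff₀ hPB hden2]
    linarith [hFG, hFlow, hGhigh]
end

section
/- Under the setting of the finite-population Geiringer theorem (the stationary distribution is uniform on the orbit [x]) and the additional assumption that all transpositions of individuals within a population belong to the generating family S, the limiting frequency of occurrence of a subset S ⊆ Ω satisfies lim_{t→∞} Φ(S, x, t) = |𝒱(x, S)| / |[x]|, where 𝒱(x, S) = {y = (y₁,…,y_b) ∈ [x] : y₁ ∈ S} is the set of populations in the orbit whose first individual lies in S. -/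
open Filter

lemma stmt18_key {Ω : Type*} [Fintype Ω] [DecidableEq Ω] (b : ℕ) (hb : 0 < b)
    (S : Finset Ω) (E : Finset (Fin b → Ω))
    (hswap : ∀ v ∈ E, ∀ i j : Fin b, (v ∘ Equiv.swap i j) ∈ E) :
    ∑ v ∈ E, ((Finset.univ.filter (fun j : Fin b => v j ∈ S)).card : ℝ)
      = (b : ℝ) * ((E.filter (fun v => v ⟨0, hb⟩ ∈ S)).card : ℝ) := by
  have h1 : ∀ v : Fin b → Ω,
      ((Finset.univ.filter (fun j : Fin b => v j ∈ S)).card : ℝ)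
        = ∑ j : Fin b, if v j ∈ S then (1:ℝ) else 0 := by
    intro v
    rw [Finset.sum_boole]
  simp_rw [h1]
  rw [Finset.sum_comm]
  have h2 : ∀ j : Fin b, ∑ v ∈ E, (if v j ∈ S then (1:ℝ) else 0)
      = ((E.filter (fun v => v ⟨0, hb⟩ ∈ S)).card : ℝ) := by
    intro j
    rw [Finset.sum_boole]
    norm_cast
    apply Finset.card_nbij' (fun v => v ∘ Equiv.swap j ⟨0, hb⟩)
      (fun v => v ∘ Equiv.swap j ⟨0, hb⟩)
    · intro v hv
      simp only [Finset.mem_filter, Finset.mem_coe] at hv ⊢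
      refine ⟨hswap v hv.1 j ⟨0, hb⟩, ?_⟩
      simpa using hv.2
    · intro v hv
      simp only [Finset.mem_filter, Finset.mem_coe] at hv ⊢
      refine ⟨hswap v hv.1 j ⟨0, hb⟩, ?_⟩
      simpa using hv.2
    · intro v _; funext k; simp [Function.comp]
    · intro v _; funext k; simp [Function.comp]
  simp_rw [h2]
  simp [mul_comm]

/-- Geiringer-like frequency formula: if the orbit E of populations is closed
under coordinate transpositions and the distributions of the process converge
(in L¹) to the uniform distribution on E, then the limiting frequency of
occurrence of individuals from S ⊆ Ω equals |𝒱(x,S)|/|E|, where 𝒱(x,S) is the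
set of populations in E whose first individual lies in S. -/
theorem stmt18 {Ω : Type*} [Fintype Ω] [DecidableEq Ω] (b : ℕ) (hb : 0 < b)
    (S : Finset Ω)
    (E : Finset (Fin b → Ω)) (hE : E.Nonempty)
    (hswap : ∀ v ∈ E, ∀ i j : Fin b, (v ∘ Equiv.swap i j) ∈ E)
    (d : ℕ → (Fin b → Ω) → ℝ)
    (hd0 : ∀ n v, 0 ≤ d n v) (hd1 : ∀ n, ∑ v ∈ E, d n v = 1)
    (hsupp : ∀ n v, v ∉ E → d n v = 0)
    (hconv : Tendsto (fun n => ∑ v ∈ E, |d n v - 1 / (E.card : ℝ)|)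
      atTop (nhds 0)) :
    Tendsto
      (fun t : ℕ => (∑ i ∈ Finset.range t, ∑ v ∈ E,
          d i v * ((Finset.univ.filter (fun j : Fin b => v j ∈ S)).card : ℝ)) /
        ((b : ℝ) * t))
      atTop
      (nhds (((E.filter (fun v => v ⟨0, hb⟩ ∈ S)).card : ℝ) / (E.card : ℝ))) := by
  have hEcard : (0:ℝ) < (E.card : ℝ) := by exact_mod_cast Finset.card_pos.mpr hE
  have hbR : (0:ℝ) < (b : ℝ) := by exact_mod_cast hb
  set V : ℝ := ((E.filter (fun v => v ⟨0, hb⟩ ∈ S)).card : ℝ)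
  set L : ℝ := (b : ℝ) * V / (E.card : ℝ) with hL
  set f : ℕ → ℝ := fun i => ∑ v ∈ E,
      d i v * ((Finset.univ.filter (fun j : Fin b => v j ∈ S)).card : ℝ) with hf
  -- f i → L
  have hfL : Tendsto f atTop (nhds L) := by
    have key := stmt18_key b hb S E hswap
    have hbound : ∀ i, |f i - L| ≤ (b:ℝ) * ∑ v ∈ E, |d i v - 1 / (E.card : ℝ)| := by
      intro i
      have : f i - L = ∑ v ∈ E, (d i v - 1 / (E.card : ℝ)) *
          ((Finset.univ.filter (fun j : Fin b => v j ∈ S)).card : ℝ) := by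
        rw [hf]
        simp only [sub_mul, Finset.sum_sub_distrib]
        congr 1
        rw [hL, ← key, Finset.sum_div]
        exact Finset.sum_congr rfl fun v _ => by ring
      rw [this]
      calc |∑ v ∈ E, (d i v - 1 / (E.card : ℝ)) *
          ((Finset.univ.filter (fun j : Fin b => v j ∈ S)).card : ℝ)|
          ≤ ∑ v ∈ E, |(d i v - 1 / (E.card : ℝ)) *
          ((Finset.univ.filter (fun j : Fin b => v j ∈ S)).card : ℝ)| :=
            Finset.abs_sum_le_sum_abs _ _
        _ ≤ ∑ v ∈ E, |d i v - 1 / (E.card : ℝ)| * (b:ℝ) := by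
            apply Finset.sum_le_sum
            intro v _
            rw [abs_mul]
            apply mul_le_mul_of_nonneg_left _ (abs_nonneg _)
            rw [abs_of_nonneg (by positivity)]
            exact_mod_cast Finset.card_filter_le _ _ |>.trans_eq (by simp)
        _ = (b:ℝ) * ∑ v ∈ E, |d i v - 1 / (E.card : ℝ)| := by
            rw [Finset.mul_sum]; simp [mul_comm]
    rw [← tendsto_sub_nhds_zero_iff]
    apply squeeze_zero_norm hbound
    have := hconv.const_mul (b:ℝ)
    simpa using this
  have hces := hfL.cesaro
  have : Tendsto (fun t : ℕ => ((b:ℝ))⁻¹ * ((t:ℝ)⁻¹ * ∑ i ∈ Finset.range t, f i))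
      atTop (nhds (((b:ℝ))⁻¹ * L)) := hces.const_mul _
  have heq : (fun t : ℕ => ((b:ℝ))⁻¹ * ((t:ℝ)⁻¹ * ∑ i ∈ Finset.range t, f i))
      = (fun t : ℕ => (∑ i ∈ Finset.range t, ∑ v ∈ E,
          d i v * ((Finset.univ.filter (fun j : Fin b => v j ∈ S)).card : ℝ)) /
        ((b : ℝ) * t)) := by
    funext t
    rw [hf]
    field_simp
  have hLeq : ((b:ℝ))⁻¹ * L = V / (E.card : ℝ) := by
    rw [hL]; field_simp
  rw [heq, hLeq] at this
  exact this
end
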